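/- Let K ⊂ R^d be a convex body (compact convex set with nonempty interior) and r > 0. Then λ_d(∂K + r B_d) ≤ 2 (λ_d(K + r B_d) − λ_d(K)), where B_d is the closed unit ball and ∂K the boundary of K. -/

import Mathlib

open MeasureTheory Metric Pointwise
open scoped RealInnerProductSpace

/-- Images under `1`-Lipschitz maps do not increase Lebesgue measure in Euclidean space. -/
lemma aux_lipschitz_volume_image {d : ℕ} {g : EuclideanSpace ℝ (Fin d) → EuclideanSpace ℝ (Fin d)}
    (hg : LipschitzWith 1 g) (s : Set (EuclideanSpace ℝ (Fin d))) :
    volume (g '' s) ≤ volume s := by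
  haveI h1 : (μH[d] : Measure (EuclideanSpace ℝ (Fin d))).IsAddHaarMeasure := by
    have := MeasureTheory.isAddHaarMeasure_hausdorffMeasure (E := EuclideanSpace ℝ (Fin d))
    simpa [finrank_euclideanSpace_fin] using this
  have hvol := Measure.isAddLeftInvariant_eq_smul (volume : Measure (EuclideanSpace ℝ (Fin d)))
    (μH[d] : Measure (EuclideanSpace ℝ (Fin d)))
  have him := hg.hausdorffMeasure_image_le (d := (d : ℝ)) (by positivity) s
  rw [hvol]
  simp only [Measure.smul_apply, smul_eq_mul]
  refine mul_le_mul_right ?_ _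
  simpa using him

/-- Existence of a metric projection onto a compact convex set, with the variational
characterization. -/
lemma aux_proj {d : ℕ} {K : Set (EuclideanSpace ℝ (Fin d))} (hK : IsCompact K)
    (hconv : Convex ℝ K) (hne : K.Nonempty) :
    ∃ P : EuclideanSpace ℝ (Fin d) → EuclideanSpace ℝ (Fin d),
      (∀ x, P x ∈ K) ∧ (∀ x, ∀ w ∈ K, ‖x - P x‖ ≤ ‖x - w‖) ∧
      (∀ x, ∀ w ∈ K, ⟪x - P x, w - P x⟫ ≤ 0) := by
  have hcomp : IsComplete K := hK.isComplete
  have hex := exists_norm_eq_iInf_of_complete_convex hne hcomp hconv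
  choose P hPmem hPeq using hex
  refine ⟨P, hPmem, ?_, ?_⟩
  · intro x w hw
    rw [hPeq x]
    haveI : Nonempty K := hne.to_subtype
    exact ciInf_le ⟨0, Set.forall_mem_range.2 fun _ => norm_nonneg _⟩ (⟨w, hw⟩ : K)
  · intro x
    exact (norm_eq_iInf_iff_real_inner_le_zero hconv (hPmem x)).1 (hPeq x)

set_option maxHeartbeats 1000000 in
/-- For a convex body `K ⊆ ℝ^d` and `r > 0`,
`λ_d(∂K + rB_d) ≤ 2 (λ_d(K + rB_d) − λ_d(K))`. -/
theorem stmt_8 (d : ℕ) (K : Set (EuclideanSpace ℝ (Fin d)))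
    (hK : IsCompact K) (hconv : Convex ℝ K) (hint : (interior K).Nonempty)
    (r : ℝ) (hr : 0 < r) :
    volume (frontier K + Metric.closedBall (0 : EuclideanSpace ℝ (Fin d)) r) ≤
      2 * (volume (K + Metric.closedBall (0 : EuclideanSpace ℝ (Fin d)) r) - volume K) := by
  classical
  set B := Metric.closedBall (0 : EuclideanSpace ℝ (Fin d)) r with hBdef
  have hKne : K.Nonempty := hint.mono interior_subset
  obtain ⟨P, hPmem, hPmin, hPinner⟩ := aux_proj hK hconv hKne
  set g : EuclideanSpace ℝ (Fin d) → EuclideanSpace ℝ (Fin d) :=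
    fun x => (2 : ℝ) • P x - x with hgdef
  -- `g` is 1-Lipschitz (firm nonexpansiveness of the projection)
  have hglip : LipschitzWith 1 g := by
    refine LipschitzWith.of_dist_le_mul fun x y => ?_
    rw [NNReal.coe_one, one_mul, dist_eq_norm, dist_eq_norm]
    have hx := hPinner x (P y) (hPmem y)
    have hy := hPinner y (P x) (hPmem x)
    have hx' : (0 : ℝ) ≤ ⟪x - P x, P x - P y⟫ := by
      rw [show P y - P x = -(P x - P y) by abel, inner_neg_right] at hx
      linarith
    have e : ⟪x - y, P x - P y⟫ =
        ⟪x - P x, P x - P y⟫ - ⟪y - P y, P x - P y⟫ + ‖P x - P y‖ ^ 2 := by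
      rw [show x - y = (x - P x) - (y - P y) + (P x - P y) by abel, inner_add_left,
        inner_sub_left, real_inner_self_eq_norm_sq]
    have key : ‖P x - P y‖ ^ 2 ≤ ⟪x - y, P x - P y⟫ := by linarith
    have hgeq : g x - g y = (2 : ℝ) • (P x - P y) - (x - y) := by
      simp only [hgdef]; module
    have expand : ‖g x - g y‖ ^ 2 =
        4 * ‖P x - P y‖ ^ 2 - 4 * ⟪x - y, P x - P y⟫ + ‖x - y‖ ^ 2 := by
      rw [hgeq, norm_sub_sq_real, norm_smul, real_inner_smul_left,
        real_inner_comm (x - y) (P x - P y)]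
      simp
      ring
    nlinarith [norm_nonneg (g x - g y), norm_nonneg (x - y), sq_nonneg (‖g x - g y‖ + ‖x - y‖)]
  set S := (K + B) \ interior K with hSdef
  have hKclosed : IsClosed K := hK.isClosed
  have h0B : (0 : EuclideanSpace ℝ (Fin d)) ∈ B := by
    simp [hBdef, hr.le]
  have hKsub : K ⊆ K + B := by
    intro x hx
    have := Set.add_mem_add hx h0B
    simpa using this
  -- the key inclusion
  have hsub : frontier K + B ⊆ S ∪ g '' S := by
    rintro y hy
    rw [Set.mem_add] at hy
    obtain ⟨f, hf, b, hb, rfl⟩ := hy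
    set y := f + b with hydef
    by_cases hyint : y ∈ interior K
    · -- inner case: `y` is the reflection of an outer point
      right
      have hfK : f ∈ K := hKclosed.frontier_subset hf
      have hFne : (frontier K).Nonempty := ⟨f, hf⟩
      have hFcomp : IsCompact (frontier K) :=
        hK.of_isClosed_subset isClosed_frontier hKclosed.frontier_subset
      obtain ⟨p, hpF, hps⟩ := hFcomp.exists_infDist_eq_dist hFne y
      set s : ℝ := infDist y (frontier K) with hsdef
      have hsr : s ≤ r := by
        have h1 : s ≤ dist y f := infDist_le_dist_of_mem hf
        have h2 : dist y f = ‖b‖ := by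
          rw [hydef, dist_eq_norm]
          simp
        have h3 : ‖b‖ ≤ r := by
          have := hb
          simpa [hBdef, dist_eq_norm] using this
        linarith
      have hs0 : 0 < s := by
        rcases lt_or_eq_of_le (infDist_nonneg (s := frontier K) (x := y)) with h | h
        · rw [hsdef]; exact h
        · exfalso
          have hyp : dist y p = 0 := by rw [← hps, hsdef, ← h]
          have hyF : y ∈ frontier K := by
            rw [show y = p from dist_eq_zero.1 hyp]; exact hpF
          exact hyF.2 hyint
      have hdisj : ∀ z ∈ ball y s, z ∉ frontier K := by
        intro z hz hzF
        have h1 : s ≤ dist y z := infDist_le_dist_of_mem hzF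
        rw [mem_ball, dist_comm] at hz
        linarith
      have hball : ball y s ⊆ interior K := by
        have hcover : ball y s ⊆ interior K ∪ (closure K)ᶜ := by
          intro z hz
          by_cases hzc : z ∈ closure K
          · left
            by_contra h
            exact hdisj z hz ⟨hzc, h⟩
          · right; exact hzc
        refine IsPreconnected.subset_left_of_subset_union isOpen_interior
          isClosed_closure.isOpen_compl ?_ hcover ⟨y, mem_ball_self hs0, hyint⟩
          (convex_ball y s).isPreconnected
        exact Set.disjoint_left.2 fun a ha ha' => ha' (subset_closure (interior_subset ha))
      set q : EuclideanSpace ℝ (Fin d) := (2 : ℝ) • p - y with hqdef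
      have hqp : q - p = p - y := by simp only [hqdef]; module
      have hqpnorm : ‖q - p‖ = s := by
        rw [hqp, ← dist_eq_norm, dist_comm, ← hps]
      have hq_far : ∀ z ∈ K, s ≤ ‖q - z‖ := by
        intro z hz
        by_contra h
        push_neg at h
        set c : EuclideanSpace ℝ (Fin d) := (2 : ℝ)⁻¹ • y + (2 : ℝ)⁻¹ • z with hcdef
        have hpc : ‖p - c‖ < s / 2 := by
          have : p - c = (2 : ℝ)⁻¹ • (q - z) := by simp only [hcdef, hqdef]; module
          rw [this, norm_smul]
          simp only [norm_inv, Real.norm_ofNat]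
          linarith [h, norm_nonneg (q - z)]
        have hbc : ball c (s / 2) ⊆ K := by
          intro m hm
          have hw : (2 : ℝ) • m - z ∈ ball y s := by
            rw [mem_ball, dist_eq_norm]
            have : (2 : ℝ) • m - z - y = (2 : ℝ) • (m - c) := by simp only [hcdef]; module
            rw [this, norm_smul]
            simp only [Real.norm_ofNat]
            rw [mem_ball, dist_eq_norm] at hm
            linarith
          have hwK : (2 : ℝ) • m - z ∈ K := interior_subset (hball hw)
          have : m = (2 : ℝ)⁻¹ • ((2 : ℝ) • m - z) + (2 : ℝ)⁻¹ • z := by module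
          rw [this]
          exact hconv hwK hz (by norm_num) (by norm_num) (by norm_num)
        have hpint : p ∈ interior K :=
          interior_maximal hbc isOpen_ball (by rwa [mem_ball, dist_eq_norm])
        exact hpF.2 hpint
      have hpK : p ∈ K := hKclosed.frontier_subset hpF
      -- the projection of q is p (uniqueness via the parallelogram law)
      have hqP : P q = p := by
        have h1 : ‖q - P q‖ ≤ ‖q - p‖ := hPmin q p hpK
        have h2 : s ≤ ‖q - P q‖ := hq_far (P q) (hPmem q)
        have h3 : ‖q - P q‖ = s := le_antisymm (by rwa [hqpnorm] at h1) h2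
        set m : EuclideanSpace ℝ (Fin d) := (2 : ℝ)⁻¹ • p + (2 : ℝ)⁻¹ • P q with hmdef
        have hmK : m ∈ K := hconv hpK (hPmem q) (by norm_num) (by norm_num) (by norm_num)
        have h4 : s ≤ ‖q - m‖ := hq_far m hmK
        have h5 : q - m = (2 : ℝ)⁻¹ • ((q - p) + (q - P q)) := by simp only [hmdef]; module
        have h6 : ‖q - m‖ = (2 : ℝ)⁻¹ * ‖(q - p) + (q - P q)‖ := by
          rw [h5, norm_smul]; simp
        have h7 : ‖(q - p) + (q - P q)‖ ^ 2 =
            ‖q - p‖ ^ 2 + 2 * ⟪q - p, q - P q⟫ + ‖q - P q‖ ^ 2 := norm_add_sq_real _ _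
        have h8 : ‖P q - p‖ ^ 2 =
            ‖q - p‖ ^ 2 - 2 * ⟪q - p, q - P q⟫ + ‖q - P q‖ ^ 2 := by
          have : P q - p = (q - p) - (q - P q) := by abel
          rw [this, norm_sub_sq_real]
        have h9 : ‖P q - p‖ = 0 := by
          nlinarith [norm_nonneg (P q - p), norm_nonneg ((q - p) + (q - P q)), hqpnorm]
        rw [norm_eq_zero, sub_eq_zero] at h9
        exact h9
      have hgq : g q = y := by
        show (2 : ℝ) • P q - q = y; rw [hqP, hqdef]; module
      refine ⟨q, ⟨?_, ?_⟩, hgq⟩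
      · -- q ∈ K + B
        have hq_eq : q = p + (p - y) := by simp only [hqdef]; module
        have hpyB : p - y ∈ B := by
          simp only [hBdef, mem_closedBall, dist_eq_norm, sub_zero]
          have : ‖p - y‖ = s := by rw [← dist_eq_norm, dist_comm, ← hps]
          linarith
        rw [hq_eq]
        exact Set.add_mem_add hpK hpyB
      · -- q ∉ interior K
        intro hq
        have := hq_far q (interior_subset hq)
        simp only [sub_self, norm_zero] at this
        linarith
    · -- boundary / outer case
      left
      refine ⟨Set.add_mem_add (hKclosed.frontier_subset hf) hb, hyint⟩
  -- measure computations
  have hKB : IsCompact (K + B) := hK.add (isCompact_closedBall _ _)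
  have hIK : volume (interior K) = volume K := by
    refine le_antisymm (measure_mono interior_subset) ?_
    calc volume K ≤ volume (interior K ∪ frontier K) := by
          refine measure_mono fun x hx => ?_
          by_cases h : x ∈ interior K
          · exact Or.inl h
          · exact Or.inr ⟨subset_closure hx, h⟩
      _ ≤ volume (interior K) + volume (frontier K) := measure_union_le _ _
      _ = volume (interior K) := by rw [hconv.addHaar_frontier volume, add_zero]
  have hKfin : volume (interior K) ≠ ⊤ := by
    rw [hIK]; exact hK.measure_lt_top.ne
  have hSvol : volume S = volume (K + B) - volume K := by
    rw [hSdef, measure_diff (interior_subset.trans hKsub)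
      isOpen_interior.measurableSet.nullMeasurableSet hKfin, hIK]
  calc volume (frontier K + B) ≤ volume (S ∪ g '' S) := measure_mono hsub
    _ ≤ volume S + volume (g '' S) := measure_union_le _ _
    _ ≤ volume S + volume S := add_le_add_right (aux_lipschitz_volume_image hglip S) _
    _ = 2 * volume S := (two_mul _).symm
    _ = 2 * (volume (K + B) - volume K) := by rw [hSvol]
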